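/- Let Γ act transitively on an infinite set Ω. Then the semidirect product S(Γ,Ω) = FSym(Ω) ⋊ Γ (with Γ acting on finitely supported permutations by conjugation via the action) is not residually finite. -/

import Mathlib

/-- The group of finitely supported permutations of `Ω`, as a subgroup of
`Equiv.Perm Ω`. -/
def FSym (Ω : Type*) : Subgroup (Equiv.Perm Ω) where
  carrier := {σ | {x | σ x ≠ x}.Finite}
  one_mem' := by
    have h : {x : Ω | (1 : Equiv.Perm Ω) x ≠ x} = ∅ := by ext x; simp
    show ({x : Ω | (1 : Equiv.Perm Ω) x ≠ x}).Finite
    rw [h]; exact Set.finite_empty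
  mul_mem' := by
    intro σ τ hσ hτ
    apply (Set.Finite.union hσ hτ).subset
    intro x hx
    by_cases h : τ x = x
    · left
      simpa [Equiv.Perm.mul_apply, h] using hx
    · right; exact h
  inv_mem' := by
    intro σ hσ
    apply hσ.subset
    intro x hx
    simp only [Set.mem_setOf_eq] at hx ⊢
    intro h
    exact hx (σ.injective (by simp [h]))

instance FSym.normal (Ω : Type*) : (FSym Ω).Normal := by
  constructor
  intro σ hσ τ
  show {x | (τ * σ * τ⁻¹ : Equiv.Perm Ω) x ≠ x}.Finite
  apply (Set.Finite.image τ hσ).subset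
  intro x hx
  simp only [Set.mem_setOf_eq, Equiv.Perm.mul_apply] at hx
  refine ⟨τ⁻¹ x, ?_, by simp⟩
  intro h
  exact hx (by rw [h]; simp)

/-- The action of `Γ` on `FSym Ω` induced by an action of `Γ` on `Ω`. -/
def fsymConj (Γ Ω : Type*) [Group Γ] [MulAction Γ Ω] : Γ →* MulAut (FSym Ω) :=
  MulAut.conjNormal.comp (MulAction.toPermHom Γ Ω)

lemma swap_mem_FSym {Ω : Type*} [DecidableEq Ω] (a b : Ω) :
    Equiv.swap a b ∈ FSym Ω := by
  show {x | Equiv.swap a b x ≠ x}.Finite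
  apply Set.Finite.subset (Set.Finite.insert a (Set.finite_singleton b))
  intro z hz
  by_contra hzn
  simp only [Set.mem_insert_iff, Set.mem_singleton_iff, not_or] at hzn
  exact hz (Equiv.swap_apply_of_ne_of_ne hzn.1 hzn.2)

/-- if `Γ` acts transitively on an infinite set `Ω`, the symmetric
enrichment `S(Γ,Ω) = FSym(Ω) ⋊ Γ` is not residually finite. -/
theorem symEnrichment_not_residuallyFinite (Γ Ω : Type*) [Group Γ] [MulAction Γ Ω]
    [MulAction.IsPretransitive Γ Ω] [Infinite Ω] :
    ¬ (∀ g : FSym Ω ⋊[fsymConj Γ Ω] Γ, g ≠ 1 →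
        ∃ (H : Type) (_ : Group H) (_ : Fintype H)
          (ψ : (FSym Ω ⋊[fsymConj Γ Ω] Γ) →* H), ψ g ≠ 1) := by
  classical
  intro h
  -- infinite family of points
  set e := Infinite.natEmbedding Ω with he
  have hne : ∀ m n : ℕ, m ≠ n → e m ≠ e n := fun m n hmn hc => hmn (e.injective hc)
  -- disjoint transpositions
  set S : ℕ → FSym Ω := fun i => ⟨Equiv.swap (e (2*i)) (e (2*i+1)),
    swap_mem_FSym _ _⟩ with hS
  set G : FSym Ω := S 0 * S 1 with hG
  have hG1 : SemidirectProduct.inl (φ := fsymConj Γ Ω) G ≠ 1 := by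
    intro hc
    have : G = 1 := SemidirectProduct.inl_injective (by simpa using hc)
    have h0 : (G : Equiv.Perm Ω) (e 1) = e 1 := by rw [this]; simp
    have : (G : Equiv.Perm Ω) (e 1) = e 0 := by
      show (Equiv.swap (e 0) (e 1) * Equiv.swap (e 2) (e 3)) (e 1) = e 0
      rw [Equiv.Perm.mul_apply,
        Equiv.swap_apply_of_ne_of_ne (hne 1 2 (by omega)) (hne 1 3 (by omega)),
        Equiv.swap_apply_right]
    rw [h0] at this
    exact hne 1 0 (by omega) this
  obtain ⟨H, _, _, ψ, hψ⟩ := h (SemidirectProduct.inl G) hG1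
  apply hψ
  set φ := ψ.comp (SemidirectProduct.inl (φ := fsymConj Γ Ω)) with hφ
  show φ G = 1
  obtain ⟨i, j, hij, heq⟩ := Finite.exists_ne_map_eq_of_infinite
    (fun i : ℕ => φ (S (i + 2)))
  set a := i + 2 with ha
  set b := j + 2 with hb
  have hab : a ≠ b := by omega
  -- φ kills S a * S b
  have hSsq : S a * S a = 1 := by
    apply Subtype.ext
    show Equiv.swap _ _ * Equiv.swap _ _ = 1
    exact Equiv.swap_mul_self _ _
  have hker : φ (S a * S b) = 1 := by
    rw [map_mul, ← heq, ← map_mul, hSsq, map_one]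
  -- conjugating permutation
  set π : Equiv.Perm Ω :=
    Equiv.swap (e (2*a)) (e 0) * Equiv.swap (e (2*a+1)) (e 1) *
    Equiv.swap (e (2*b)) (e 2) * Equiv.swap (e (2*b+1)) (e 3) with hπ
  have hπmem : π ∈ FSym Ω :=
    mul_mem (mul_mem (mul_mem (swap_mem_FSym _ _) (swap_mem_FSym _ _))
      (swap_mem_FSym _ _)) (swap_mem_FSym _ _)
  set P : FSym Ω := ⟨π, hπmem⟩ with hP
  -- compute images of the four relevant points under π
  have ne' : ∀ m n : ℕ, m ≠ n → e m ≠ e n := hne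
  have hxa : π (e (2*a)) = e 0 := by
    rw [hπ]
    simp only [Equiv.Perm.mul_apply]
    rw [Equiv.swap_apply_of_ne_of_ne (ne' _ _ (by omega)) (ne' _ _ (by omega)),
        Equiv.swap_apply_of_ne_of_ne (ne' _ _ (by omega)) (ne' _ _ (by omega)),
        Equiv.swap_apply_of_ne_of_ne (ne' _ _ (by omega)) (ne' _ _ (by omega)),
        Equiv.swap_apply_left]
  have hya : π (e (2*a+1)) = e 1 := by
    rw [hπ]
    simp only [Equiv.Perm.mul_apply]
    rw [Equiv.swap_apply_of_ne_of_ne (ne' _ _ (by omega)) (ne' _ _ (by omega)),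
        Equiv.swap_apply_of_ne_of_ne (ne' _ _ (by omega)) (ne' _ _ (by omega)),
        Equiv.swap_apply_left,
        Equiv.swap_apply_of_ne_of_ne (ne' _ _ (by omega)) (ne' _ _ (by omega))]
  have hxb : π (e (2*b)) = e 2 := by
    rw [hπ]
    simp only [Equiv.Perm.mul_apply]
    rw [Equiv.swap_apply_of_ne_of_ne (ne' _ _ (by omega)) (ne' _ _ (by omega)),
        Equiv.swap_apply_left,
        Equiv.swap_apply_of_ne_of_ne (ne' _ _ (by omega)) (ne' _ _ (by omega)),
        Equiv.swap_apply_of_ne_of_ne (ne' _ _ (by omega)) (ne' _ _ (by omega))]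
  have hyb : π (e (2*b+1)) = e 3 := by
    rw [hπ]
    simp only [Equiv.Perm.mul_apply]
    rw [Equiv.swap_apply_left,
        Equiv.swap_apply_of_ne_of_ne (ne' _ _ (by omega)) (ne' _ _ (by omega)),
        Equiv.swap_apply_of_ne_of_ne (ne' _ _ (by omega)) (ne' _ _ (by omega)),
        Equiv.swap_apply_of_ne_of_ne (ne' _ _ (by omega)) (ne' _ _ (by omega))]
  -- conjugation identity
  have hconj : P * (S a * S b) * P⁻¹ = G := by
    apply Subtype.ext
    show π * (Equiv.swap (e (2*a)) (e (2*a+1)) * Equiv.swap (e (2*b)) (e (2*b+1))) * π⁻¹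
      = Equiv.swap (e 0) (e 1) * Equiv.swap (e 2) (e 3)
    have : π * (Equiv.swap (e (2*a)) (e (2*a+1)) * Equiv.swap (e (2*b)) (e (2*b+1))) * π⁻¹
        = (π * Equiv.swap (e (2*a)) (e (2*a+1)) * π⁻¹) *
          (π * Equiv.swap (e (2*b)) (e (2*b+1)) * π⁻¹) := by group
    rw [this, ← Equiv.swap_apply_apply, ← Equiv.swap_apply_apply, hxa, hya, hxb, hyb]
  calc φ G = φ (P * (S a * S b) * P⁻¹) := by rw [hconj]
    _ = φ P * φ (S a * S b) * (φ P)⁻¹ := by rw [map_mul, map_mul, map_inv]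
    _ = 1 := by rw [hker, mul_one, mul_inv_cancel]
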